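/- Let F be the free group on x_j^{(k)} for 1 ≤ j ≤ 2g and k ∈ ℤ/d, and suppose given elements u_{i,k}^♯, u_{i,k}^♭ ∈ F (1 ≤ i ≤ 2g, k ∈ ℤ/d) satisfying [u_{1,k}^♭, u_{2,k}^♭]⋯[u_{2g−1,k}^♭, u_{2g,k}^♭] = [u_{1,k}^♯, u_{2,k}^♯]⋯[u_{2g−1,k}^♯, u_{2g,k}^♯] for all k. Set r_{i,k} = u_{i,k}^♯ (u_{i,k+1}^♭)⁻¹, w_{i,k} = Π_{j=1}^i [u_{2j−1,k+1}^♭, u_{2j,k+1}^♭], and W_{i,k} = w_{i−1,k} r_{2i−1,k} w_{i−1,k}⁻¹ · (w_{i−1,k} u_{2i−1,k+1}^♭) r_{2i,k} (w_{i−1,k} u_{2i−1,k+1}^♭)⁻¹ · (w_{i,k} u_{2i,k+1}^♭) r_{2i−1,k}⁻¹ (w_{i,k} u_{2i,k+1}^♭)⁻¹ · w_{i,k} r_{2i,k}⁻¹ w_{i,k}⁻¹. Then Π_{k=1}^d (W_{1,k} W_{2,k} ⋯ W_{g,k}) = 1 in F. -/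

import Mathlib

open scoped commutatorElement

/-- The identity among the relations of the presentation of the fundamental group of the
`d`-fold cyclic branched cover of `S³` branched over a knot (Proposition 3.7): in the free
group `F` on `x_j^{(k)}` (`1 ≤ j ≤ 2g`, `k ∈ ℤ/d`), given `u_{i,k}^♯, u_{i,k}^♭ ∈ F` with
`Π_j [u_{2j−1,k}^♭, u_{2j,k}^♭] = Π_j [u_{2j−1,k}^♯, u_{2j,k}^♯]` for all `k`, and
`r_{i,k} = u_{i,k}^♯ (u_{i,k+1}^♭)⁻¹`, `w_{i,k} = Π_{j=1}^i [u_{2j−1,k+1}^♭, u_{2j,k+1}^♭]`,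
the product `Π_{k=1}^d (W_{1,k} ⋯ W_{g,k})` equals `1`.
(The `u`-index `i` is 0-based: `u_{2i−1,k}` is `us (2*(i-1)) k`.) -/
theorem branched_cover_identity (g d : ℕ) (hd : 1 ≤ d)
    (us ub : ℕ → ZMod d → FreeGroup (Fin (2*g) × ZMod d))
    (hcomm : ∀ k : ZMod d,
      ((List.range g).map fun j => ⁅ub (2*j) k, ub (2*j+1) k⁆).prod
        = ((List.range g).map fun j => ⁅us (2*j) k, us (2*j+1) k⁆).prod)
    (r : ℕ → ZMod d → FreeGroup (Fin (2*g) × ZMod d))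
    (hr : ∀ i k, r i k = us i k * (ub i (k+1))⁻¹)
    (w : ℕ → ZMod d → FreeGroup (Fin (2*g) × ZMod d))
    (hw : ∀ i k, w i k = ((List.range i).map fun j => ⁅ub (2*j) (k+1), ub (2*j+1) (k+1)⁆).prod)
    (W : ℕ → ZMod d → FreeGroup (Fin (2*g) × ZMod d))
    (hW : ∀ i k, W i k =
      w (i-1) k * r (2*(i-1)) k * (w (i-1) k)⁻¹
      * ((w (i-1) k * ub (2*(i-1)) (k+1)) * r (2*(i-1)+1) k
          * (w (i-1) k * ub (2*(i-1)) (k+1))⁻¹)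
      * ((w i k * ub (2*(i-1)+1) (k+1)) * (r (2*(i-1)) k)⁻¹
          * (w i k * ub (2*(i-1)+1) (k+1))⁻¹)
      * (w i k * (r (2*(i-1)+1) k)⁻¹ * (w i k)⁻¹)) :
    ((List.range d).map fun k =>
      ((List.range g).map fun i => W (i+1) ((k : ZMod d) + 1)).prod).prod = 1 := by
  set P : ZMod d → FreeGroup (Fin (2*g) × ZMod d) :=
    fun k => ((List.range g).map fun j => ⁅ub (2*j) k, ub (2*j+1) k⁆).prod with hP
  have hW' : ∀ i k, W (i+1) k = w i k * ⁅us (2*i) k, us (2*i+1) k⁆ * (w (i+1) k)⁻¹ := by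
    intro i k
    have hwsucc : w (i+1) k = w i k * ⁅ub (2*i) (k+1), ub (2*i+1) (k+1)⁆ := by
      rw [hw, hw, List.range_succ, List.map_append, List.prod_append]
      simp
    rw [hW]
    simp only [Nat.add_sub_cancel]
    rw [hr, hr, hwsucc]
    simp only [commutatorElement_def]
    group
  have key : ∀ n k, ((List.range n).map fun i => W (i+1) k).prod
      = ((List.range n).map fun j => ⁅us (2*j) k, us (2*j+1) k⁆).prod * (w n k)⁻¹ := by
    intro n k
    induction n with
    | zero => simp [hw]
    | succ n ih =>
        simp only [List.range_succ, List.map_append, List.prod_append, List.map_cons,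
          List.map_nil, List.prod_cons, List.prod_nil, mul_one]
        rw [ih, hW' n k]
        group
  have hinner : ∀ k : ZMod d,
      ((List.range g).map fun i => W (i+1) k).prod = P k * (P (k+1))⁻¹ := by
    intro k
    rw [key g k, ← hcomm k, hw g k]
  set Q : ℕ → FreeGroup (Fin (2*g) × ZMod d) :=
    fun k => P ((k : ZMod d) + 1) * (P ((k : ZMod d) + 1 + 1))⁻¹ with hQ
  have outer : ∀ n : ℕ, ((List.range n).map Q).prod = P 1 * (P ((n : ZMod d) + 1))⁻¹ := by
    intro n
    induction n with
    | zero => simp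
    | succ n ih =>
        rw [List.range_succ, List.map_append, List.prod_append, ih]
        simp only [hQ, List.map_cons, List.map_nil, List.prod_cons, List.prod_nil, mul_one]
        push_cast
        group
  calc ((List.range d).map fun k =>
      ((List.range g).map fun i => W (i+1) ((k : ZMod d) + 1)).prod).prod
      = ((List.range d).map Q).prod := by
        simp only [bind_pure_comp, List.map_eq_map, List.map_map]
        congr 1; apply List.map_congr_left; intro k _
        simp only [Function.comp_apply]
        rw [hinner ((k : ZMod d) + 1), hQ]
    _ = P 1 * (P ((d : ZMod d) + 1))⁻¹ := outer d
    _ = 1 := by rw [ZMod.natCast_self]; group
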